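/- Let F be a field, ω ∈ F a primitive n-th root of unity, and F_n the associated n×n Fourier matrix. Let k ≥ 1 with gcd(k, n) = 1, and let S be the s×s matrix whose (l, m) entry (0 ≤ l, m ≤ s−1) is ω^{(i_1 + l·k)·k_{m+1}}, where k_1 < k_2 < … < k_s are distinct column indices in {0, …, n−1} and i_1 ≥ 0 (i.e. S is formed from rows of F_n whose indices, taken modulo n, are in arithmetic progression with common difference k, and columns k_1, …, k_s). Then det S ≠ 0. -/

import Mathlib

/-- Let `ω ∈ F` be a primitive `n`-th root of unity and `F_n` the
associated Fourier matrix with `(i,j)` entry `ω^{ij}`.  Let `k ≥ 1` with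
`gcd(k, n) = 1`, and let `S` be the `s × s` matrix whose `(l, m)` entry
(`0 ≤ l, m ≤ s-1`) is `ω^{(i1 + l·k)·k_{m+1}}`, where `k_1 < k_2 < … < k_s` are
distinct column indices in `{0, …, n-1}` and `i1 ≥ 0`.  Then `det S ≠ 0`. -/
theorem fourier_arith_submatrix_det_ne_zero {F : Type*} [Field F]
    (n s k i1 : ℕ) (ω : F) (hω : IsPrimitiveRoot ω n)
    (hk : 1 ≤ k) (hcop : Nat.gcd k n = 1)
    (cols : Fin s → Fin n) (hcols : StrictMono cols) :
    (Matrix.of fun l m : Fin s => ω ^ ((i1 + (l : ℕ) * k) * (cols m : ℕ))).det ≠ 0 := by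
  rcases Nat.eq_zero_or_pos n with hn | hn
  · subst hn
    rcases Nat.eq_zero_or_pos s with hs | hs
    · subst hs; simp [Matrix.det_fin_zero]
    · exact (cols ⟨0, hs⟩).elim0
  · have hω0 : ω ≠ 0 := hω.ne_zero hn.ne'
    set x : Fin s → F := fun m => ω ^ (k * (cols m : ℕ)) with hx
    set c : Fin s → F := fun m => ω ^ (i1 * (cols m : ℕ)) with hc
    have hM : (Matrix.of fun l m : Fin s => ω ^ ((i1 + (l : ℕ) * k) * (cols m : ℕ))) =
        Matrix.transpose (Matrix.of fun m l : Fin s => c m * (Matrix.vandermonde x) m l) := by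
      ext l m
      simp only [Matrix.of_apply, Matrix.transpose_apply, Matrix.vandermonde_apply, hx, hc,
        ← pow_mul, ← pow_add]
      congr 1
      ring
    rw [hM, Matrix.det_transpose, Matrix.det_mul_column, Matrix.det_vandermonde]
    have hxinj : Function.Injective x := by
      intro a b hab
      simp only [hx] at hab
      set u : Fˣ := (hω.isUnit hn.ne').unit with hu
      have hωu : IsPrimitiveRoot u n := hω.isUnit_unit hn.ne'
      have horder : orderOf u = n := hωu.eq_orderOf.symm
      have hab' : u ^ (k * (cols a : ℕ)) = u ^ (k * (cols b : ℕ)) :=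
        Units.ext (by simpa [hu] using hab)
      have := pow_eq_pow_iff_modEq.mp hab'
      rw [horder] at this
      have hmod : (cols a : ℕ) ≡ (cols b : ℕ) [MOD n] :=
        Nat.ModEq.cancel_left_of_coprime (Nat.gcd_comm k n ▸ hcop) this
      have : (cols a : ℕ) = (cols b : ℕ) :=
        (Nat.ModEq.eq_of_lt_of_lt hmod (cols a).2 (cols b).2)
      exact hcols.injective (Fin.ext this)
    refine mul_ne_zero ?_ ?_
    · exact Finset.prod_ne_zero_iff.mpr fun m _ => pow_ne_zero _ hω0
    · refine Finset.prod_ne_zero_iff.mpr fun i _ => Finset.prod_ne_zero_iff.mpr fun j hj => ?_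
      rw [Finset.mem_Ioi] at hj
      exact sub_ne_zero_of_ne fun h => hj.ne' (hxinj h)
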